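/- arXiv:2410.14030 — 5 statements merged into one kernel-verified Lean document; each statement's English description precedes it below -/
import Mathlib

section
/- Let n ≥ 1 and let A be a nonzero real n×n matrix that is the weighted adjacency matrix of a directed acyclic graph, i.e., there exists a permutation σ of {1,…,n} such that A_{ij} = 0 whenever σ(i) ≥ σ(j). Let B = A + Aᵀ and γ = max_{1≤j≤n} Σ_{i≠j} |B_{ij}| (note γ > 0 since A ≠ 0). Then the matrix Â = I − Aᵀ/γ satisfies ‖Â‖₂ ≤ 2, where ‖·‖₂ denotes the spectral norm (the ℓ²→ℓ² operator norm). -/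
open Matrix
/-- The spectral norm (ℓ²→ℓ² operator norm) of a real matrix. -/
noncomputable def matSpectralNorm {m n : Type*} [Fintype m] [Fintype n] [DecidableEq n]
    (M : Matrix m n ℝ) : ℝ :=
  ‖LinearMap.toContinuousLinearMap (Matrix.toEuclideanLin M)‖

/-- Bound on the spectral norm via row and column absolute sums. -/
lemma spectralNorm_le_of_row_col {n : ℕ} (M : Matrix (Fin n) (Fin n) ℝ) (K : ℝ) (hK : 0 ≤ K)
    (hrow : ∀ i, ∑ j, |M i j| ≤ K) (hcol : ∀ j, ∑ i, |M i j| ≤ K) :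
    matSpectralNorm M ≤ K := by
  apply ContinuousLinearMap.opNorm_le_bound _ hK
  intro x
  have hx : (0:ℝ) ≤ ‖x‖ := norm_nonneg x
  rw [← Real.sqrt_sq (mul_nonneg hK hx), ← Real.sqrt_sq (norm_nonneg _)]
  apply Real.sqrt_le_sqrt
  have hnorm : ‖(LinearMap.toContinuousLinearMap (Matrix.toEuclideanLin M)) x‖ ^ 2
      = ∑ i, (M.mulVec (fun j => x j) i) ^ 2 := by
    rw [EuclideanSpace.norm_eq]
    rw [Real.sq_sqrt (by positivity)]
    congr 1
    ext i
    rw [Real.norm_eq_abs, sq_abs]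
    rfl
  have hxnorm : ‖x‖ ^ 2 = ∑ j, (x j) ^ 2 := by
    rw [EuclideanSpace.norm_eq, Real.sq_sqrt (by positivity)]
    congr 1; ext j; rw [Real.norm_eq_abs, sq_abs]
  rw [hnorm, mul_pow, hxnorm]
  calc ∑ i, (M.mulVec (fun j => x j) i) ^ 2
      ≤ ∑ i, (∑ j, |M i j|) * (∑ j, |M i j| * (x j) ^ 2) := by
        apply Finset.sum_le_sum
        intro i _
        have h1 : (M.mulVec (fun j => x j) i) ^ 2 ≤ (∑ j, |M i j * x j|) ^ 2 := by
          rw [← sq_abs]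
          apply pow_le_pow_left₀ (abs_nonneg _) _ 2
          exact Finset.abs_sum_le_sum_abs (fun j => M i j * x j) Finset.univ
        refine h1.trans ?_
        apply Finset.sum_sq_le_sum_mul_sum_of_sq_eq_mul
        · intro j _; exact abs_nonneg _
        · intro j _; positivity
        · intro j _
          rw [abs_mul, mul_pow, sq_abs, sq_abs, ← sq_abs (M i j)]
          ring
    _ ≤ ∑ i, K * (∑ j, |M i j| * (x j) ^ 2) := by
        apply Finset.sum_le_sum
        intro i _
        apply mul_le_mul_of_nonneg_right (hrow i)
        positivity
    _ = K * ∑ j, (∑ i, |M i j|) * (x j) ^ 2 := by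
        rw [← Finset.mul_sum, Finset.sum_comm]
        congr 1
        exact Finset.sum_congr rfl fun j _ => (Finset.sum_mul _ _ _).symm
    _ ≤ K * ∑ j, K * (x j) ^ 2 := by
        apply mul_le_mul_of_nonneg_left _ hK
        apply Finset.sum_le_sum
        intro j _
        exact mul_le_mul_of_nonneg_right (hcol j) (sq_nonneg _)
    _ = K ^ 2 * ∑ j, (x j) ^ 2 := by rw [← Finset.mul_sum]; ring

/-- If `A ≠ 0` is the weighted adjacency matrix of a DAG on `n ≥ 1` nodes
(i.e. strictly upper triangular after a simultaneous permutation of rows and columns),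
`B = A + Aᵀ` and `γ = max_j ∑_{i ≠ j} |B i j|`, then `Â = I - Aᵀ/γ` has spectral norm
at most `2`. -/
theorem dag_normalized_adjacency_spectralNorm_le_two {n : ℕ} (hn : 1 ≤ n)
    (A : Matrix (Fin n) (Fin n) ℝ) (hA : A ≠ 0)
    (hdag : ∃ σ : Equiv.Perm (Fin n), ∀ i j, σ j ≤ σ i → A i j = 0) :
    matSpectralNorm
      ((1 : Matrix (Fin n) (Fin n) ℝ) -
        (Finset.univ.sup'
          (Finset.univ_nonempty_iff.mpr (Fin.pos_iff_nonempty.mp hn))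
          (fun j => ∑ i ∈ Finset.univ.erase j, |(A + Aᵀ) i j|))⁻¹ • Aᵀ) ≤ 2 := by
  obtain ⟨σ, hσ⟩ := hdag
  set ne : Finset.univ.Nonempty :=
    (Finset.univ_nonempty_iff.mpr (Fin.pos_iff_nonempty.mp hn))
  set γ : ℝ := Finset.univ.sup'
          ne (fun j => ∑ i ∈ Finset.univ.erase j, |(A + Aᵀ) i j|) with hγdef
  -- diagonal of A vanishes
  have hdiag : ∀ i, A i i = 0 := fun i => hσ i i le_rfl
  -- |A i j| ≤ |(A + Aᵀ) i j|
  have habs : ∀ i j, |A i j| ≤ |(A + Aᵀ) i j| := by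
    intro i j
    by_cases h : A i j = 0
    · simp [h]
    · have hji : A j i = 0 := by
        apply hσ
        by_contra hle
        exact h (hσ i j (le_of_not_ge hle))
      simp [Matrix.add_apply, Matrix.transpose_apply, hji]
  -- erase sums equal full sums
  have herase : ∀ j, ∑ i ∈ Finset.univ.erase j, |(A + Aᵀ) i j| = ∑ i, |(A + Aᵀ) i j| := by
    intro j
    rw [Finset.sum_erase]
    simp [Matrix.add_apply, Matrix.transpose_apply, hdiag j]
  -- column sums of |A| are at most γ
  have hcolA : ∀ j, ∑ i, |A i j| ≤ γ := by
    intro j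
    calc ∑ i, |A i j| ≤ ∑ i, |(A + Aᵀ) i j| := Finset.sum_le_sum fun i _ => habs i j
      _ = ∑ i ∈ Finset.univ.erase j, |(A + Aᵀ) i j| := (herase j).symm
      _ ≤ γ := by
          rw [hγdef]
          exact Finset.le_sup' (fun j => ∑ i ∈ Finset.univ.erase j, |(A + Aᵀ) i j|)
            (Finset.mem_univ j)
  -- row sums of |A| are at most γ (by symmetry of A + Aᵀ)
  have hrowA : ∀ i, ∑ j, |A i j| ≤ γ := by
    intro i
    calc ∑ j, |A i j| ≤ ∑ j, |(A + Aᵀ) j i| := by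
          apply Finset.sum_le_sum
          intro j _
          have : |(A + Aᵀ) i j| = |(A + Aᵀ) j i| := by
            simp [Matrix.add_apply, Matrix.transpose_apply, add_comm]
          rw [← this]; exact habs i j
      _ = ∑ j ∈ Finset.univ.erase i, |(A + Aᵀ) j i| := (herase i).symm
      _ ≤ γ := by
          rw [hγdef]
          exact Finset.le_sup' (fun j => ∑ i ∈ Finset.univ.erase j, |(A + Aᵀ) i j|)
            (Finset.mem_univ i)
  -- γ > 0
  have hγpos : 0 < γ := by
    obtain ⟨i, j, hij⟩ : ∃ i j, A i j ≠ 0 := by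
      by_contra h
      push_neg at h
      exact hA (by ext i j; simp [h])
    have : 0 < |A i j| := abs_pos.mpr hij
    have h2 : |A i j| ≤ ∑ i', |A i' j| := by
      apply Finset.single_le_sum (f := fun i' => |A i' j|) (fun _ _ => abs_nonneg _)
        (Finset.mem_univ i)
    linarith [hcolA j]
  -- apply the bound
  apply spectralNorm_le_of_row_col _ 2 (by norm_num)
  · intro i
    have h1 : ∀ j : Fin n, |((1 : Matrix (Fin n) (Fin n) ℝ) - γ⁻¹ • Aᵀ) i j|
        ≤ |(1 : Matrix (Fin n) (Fin n) ℝ) i j| + γ⁻¹ * |A j i| := by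
      intro j
      calc |((1 : Matrix (Fin n) (Fin n) ℝ) - γ⁻¹ • Aᵀ) i j|
          ≤ |(1 : Matrix (Fin n) (Fin n) ℝ) i j| + |(γ⁻¹ • Aᵀ) i j| := by
            exact abs_sub ((1 : Matrix (Fin n) (Fin n) ℝ) i j) ((γ⁻¹ • Aᵀ) i j)
        _ = |(1 : Matrix (Fin n) (Fin n) ℝ) i j| + γ⁻¹ * |A j i| := by
            rw [Matrix.smul_apply, Matrix.transpose_apply, smul_eq_mul, abs_mul,
              abs_of_pos (inv_pos.mpr hγpos)]
    calc ∑ j, |((1 : Matrix (Fin n) (Fin n) ℝ) - γ⁻¹ • Aᵀ) i j|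
        ≤ ∑ j, (|(1 : Matrix (Fin n) (Fin n) ℝ) i j| + γ⁻¹ * |A j i|) :=
          Finset.sum_le_sum fun j _ => h1 j
      _ = 1 + γ⁻¹ * ∑ j, |A j i| := by
          rw [Finset.sum_add_distrib, ← Finset.mul_sum]
          congr 1
          simp [Matrix.one_apply, apply_ite]
      _ ≤ 1 + γ⁻¹ * γ := by
          have := hcolA i
          have h3 : (0:ℝ) ≤ γ⁻¹ := le_of_lt (inv_pos.mpr hγpos)
          nlinarith
      _ = 2 := by rw [inv_mul_cancel₀ (ne_of_gt hγpos)]; norm_num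
  · intro j
    have h1 : ∀ i : Fin n, |((1 : Matrix (Fin n) (Fin n) ℝ) - γ⁻¹ • Aᵀ) i j|
        ≤ |(1 : Matrix (Fin n) (Fin n) ℝ) i j| + γ⁻¹ * |A j i| := by
      intro i
      calc |((1 : Matrix (Fin n) (Fin n) ℝ) - γ⁻¹ • Aᵀ) i j|
          ≤ |(1 : Matrix (Fin n) (Fin n) ℝ) i j| + |(γ⁻¹ • Aᵀ) i j| := by
            exact abs_sub ((1 : Matrix (Fin n) (Fin n) ℝ) i j) ((γ⁻¹ • Aᵀ) i j)
        _ = |(1 : Matrix (Fin n) (Fin n) ℝ) i j| + γ⁻¹ * |A j i| := by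
            rw [Matrix.smul_apply, Matrix.transpose_apply, smul_eq_mul, abs_mul,
              abs_of_pos (inv_pos.mpr hγpos)]
    calc ∑ i, |((1 : Matrix (Fin n) (Fin n) ℝ) - γ⁻¹ • Aᵀ) i j|
        ≤ ∑ i, (|(1 : Matrix (Fin n) (Fin n) ℝ) i j| + γ⁻¹ * |A j i|) :=
          Finset.sum_le_sum fun i _ => h1 i
      _ = 1 + γ⁻¹ * ∑ i, |A j i| := by
          rw [Finset.sum_add_distrib, ← Finset.mul_sum]
          congr 1
          simp [Matrix.one_apply, apply_ite]
      _ ≤ 1 + γ⁻¹ * γ := by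
          have := hrowA j
          have h3 : (0:ℝ) ≤ γ⁻¹ := le_of_lt (inv_pos.mpr hγpos)
          nlinarith
      _ = 2 := by rw [inv_mul_cancel₀ (ne_of_gt hγpos)]; norm_num
end

section
/- Let d ≥ 1 and equip ℝ^d with the sup norm ‖v‖∞ = max_i |v_i|. Let α, β > 0 and let f_z, f_r, f_c : ℝ^d → ℝ^d each be 1-Lipschitz with respect to ‖·‖∞. Define z(x) = α·σ(f_z(x)), r(x) = β·σ(f_r(x)), c(x) = tanh(f_c(r(x) ⊙ x)), and h(x) = z(x) ⊙ (c(x) − x), where σ(u) = 1/(1 + exp(−u)) and tanh are applied coordinatewise and ⊙ is the coordinatewise product. Then for all x, y ∈ ℝ^d with ‖x‖∞ ≤ 1 and ‖y‖∞ ≤ 1, ‖h(x) − h(y)‖∞ ≤ α·(5β/4 + 3/2)·‖x − y‖∞. -/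
open scoped NNReal


/-- The logistic (sigmoid) function. -/
noncomputable def sigmoid (u : ℝ) : ℝ := 1 / (1 + Real.exp (-u))

lemma hasDerivAt_sigmoid (u : ℝ) :
    HasDerivAt sigmoid (Real.exp (-u) / (1 + Real.exp (-u)) ^ 2) u := by
  have h1 : HasDerivAt (fun x : ℝ => 1 + Real.exp (-x)) (-Real.exp (-u)) u := by
    simpa using ((Real.hasDerivAt_exp (-u)).comp u (hasDerivAt_neg u)).const_add 1
  have h2 := h1.inv (by positivity)
  have hs : sigmoid = fun x : ℝ => (1 + Real.exp (-x))⁻¹ := by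
    funext x; simp [sigmoid, one_div]
  rw [hs]
  exact (by simpa [neg_neg] using h2 :
    HasDerivAt (fun x : ℝ => 1 + Real.exp (-x))⁻¹ (Real.exp (-u) / (1 + Real.exp (-u)) ^ 2) u)

lemma sigmoid_lipschitz : LipschitzWith (4 : ℝ≥0)⁻¹ sigmoid := by
  apply lipschitzWith_of_nnnorm_deriv_le
    (fun u => (hasDerivAt_sigmoid u).differentiableAt)
  intro u
  rw [← NNReal.coe_le_coe, coe_nnnorm, (hasDerivAt_sigmoid u).deriv, Real.norm_eq_abs,
    abs_of_pos (by positivity), NNReal.coe_inv]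
  rw [div_le_iff₀ (by positivity)]
  push_cast
  nlinarith [sq_nonneg (1 - Real.exp (-u)), Real.exp_pos (-u)]

lemma sigmoid_dist (a b : ℝ) : |sigmoid a - sigmoid b| ≤ |a - b| / 4 := by
  have h := sigmoid_lipschitz.dist_le_mul a b
  simp only [Real.dist_eq, NNReal.coe_inv] at h
  push_cast at h
  linarith

lemma sigmoid_nonneg (u : ℝ) : 0 ≤ sigmoid u := by
  unfold sigmoid; positivity

lemma sigmoid_le_one (u : ℝ) : sigmoid u ≤ 1 := by
  unfold sigmoid
  rw [div_le_one (by positivity)]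
  have := Real.exp_pos (-u); linarith

lemma abs_tanh_le_one (u : ℝ) : |Real.tanh u| ≤ 1 := by
  rw [Real.tanh_eq_sinh_div_cosh, abs_div, abs_of_pos (Real.cosh_pos u),
    div_le_one (Real.cosh_pos u)]
  nlinarith [Real.cosh_sq u, Real.cosh_pos u, abs_nonneg (Real.sinh u),
    sq_abs (Real.sinh u)]

lemma hasDerivAt_tanh (u : ℝ) :
    HasDerivAt Real.tanh (1 / Real.cosh u ^ 2) u := by
  have h := (Real.hasDerivAt_sinh u).div (Real.hasDerivAt_cosh u) (Real.cosh_pos u).ne'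
  have heq : (Real.cosh u * Real.cosh u - Real.sinh u * Real.sinh u) / Real.cosh u ^ 2
      = 1 / Real.cosh u ^ 2 := by
    congr 1
    nlinarith [Real.cosh_sq u]
  rw [heq] at h
  rw [show Real.tanh = Real.sinh / Real.cosh from
    funext fun x => by rw [Real.tanh_eq_sinh_div_cosh]; rfl]
  exact h

lemma tanh_lipschitz : LipschitzWith 1 Real.tanh := by
  apply lipschitzWith_of_nnnorm_deriv_le
    (fun u => (hasDerivAt_tanh u).differentiableAt)
  intro u
  rw [← NNReal.coe_le_coe, coe_nnnorm, (hasDerivAt_tanh u).deriv, Real.norm_eq_abs,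
    abs_of_pos (by positivity)]
  push_cast
  rw [div_le_one (by positivity)]
  nlinarith [Real.cosh_sq u, sq_nonneg (Real.sinh u)]

lemma tanh_dist (a b : ℝ) : |Real.tanh a - Real.tanh b| ≤ |a - b| := by
  have h := tanh_lipschitz.dist_le_mul a b
  simpa [Real.dist_eq] using h

/-- The GRU-flow update `h(x) = z(x) ⊙ (c(x) − x)` with
`z(x) = α·σ(f_z(x))`, `r(x) = β·σ(f_r(x))`, `c(x) = tanh(f_c(r(x) ⊙ x))`,
where `σ` and `tanh` act coordinatewise and `⊙` is the coordinatewise product. -/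
noncomputable def gruH {d : ℕ} (α β : ℝ) (fz fr fc : (Fin d → ℝ) → (Fin d → ℝ))
    (x : Fin d → ℝ) : Fin d → ℝ :=
  fun i =>
    (α * sigmoid (fz x i)) *
      (Real.tanh (fc (fun j => (β * sigmoid (fr x j)) * x j) i) - x i)

/-- If `f_z, f_r, f_c` are `1`-Lipschitz in the sup norm and `α, β > 0`, then the
GRU-flow update `h` satisfies `‖h x − h y‖∞ ≤ α (5β/4 + 3/2) ‖x − y‖∞` on the unit ball. -/
theorem gruH_lipschitz_on_unit_ball {d : ℕ} (hd : 1 ≤ d) (α β : ℝ)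
    (hα : 0 < α) (hβ : 0 < β) (fz fr fc : (Fin d → ℝ) → (Fin d → ℝ))
    (hfz : LipschitzWith 1 fz) (hfr : LipschitzWith 1 fr) (hfc : LipschitzWith 1 fc) :
    ∀ x y : Fin d → ℝ, ‖x‖ ≤ 1 → ‖y‖ ≤ 1 →
      ‖gruH α β fz fr fc x - gruH α β fz fr fc y‖ ≤
        α * (5 * β / 4 + 3 / 2) * ‖x - y‖ := by
  intro x y hx hy
  set K := ‖x - y‖ with hK
  have hK0 : 0 ≤ K := norm_nonneg _
  -- coordinatewise distance bounds
  have hcoord : ∀ (v w : Fin d → ℝ) (i : Fin d), |v i - w i| ≤ ‖v - w‖ := by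
    intro v w i
    have := norm_le_pi_norm (v - w) i
    simpa [Real.norm_eq_abs] using this
  have hlipcoord : ∀ (g : (Fin d → ℝ) → (Fin d → ℝ)), LipschitzWith 1 g →
      ∀ (v w : Fin d → ℝ) (i : Fin d), |g v i - g w i| ≤ ‖v - w‖ := by
    intro g hg v w i
    have h1 := hg.dist_le_mul v w
    have h2 := dist_le_pi_dist (g v) (g w) i
    simp only [dist_eq_norm, NNReal.coe_one, one_mul, Real.dist_eq] at h1 h2 ⊢
    calc |g v i - g w i| ≤ ‖g v - g w‖ := by
          simpa [Real.norm_eq_abs] using norm_le_pi_norm (g v - g w) i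
      _ ≤ ‖v - w‖ := by
          have := hg.dist_le_mul v w
          simpa [dist_eq_norm] using this
  -- the reset-gated inputs
  set wx : Fin d → ℝ := fun j => (β * sigmoid (fr x j)) * x j with hwx
  set wy : Fin d → ℝ := fun j => (β * sigmoid (fr y j)) * y j with hwy
  have hxy_coord : ∀ i, |x i - y i| ≤ K := fun i => hcoord x y i
  have hxi : ∀ i, |x i| ≤ 1 := fun i => by
    have := norm_le_pi_norm x i
    simp only [Real.norm_eq_abs] at this; linarith
  have hyi : ∀ i, |y i| ≤ 1 := fun i => by
    have := norm_le_pi_norm y i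
    simp only [Real.norm_eq_abs] at this; linarith
  have hw : ‖wx - wy‖ ≤ 5 * β / 4 * K := by
    rw [pi_norm_le_iff_of_nonneg (by positivity)]
    intro j
    simp only [Pi.sub_apply, Real.norm_eq_abs, hwx, hwy]
    have e1 : β * sigmoid (fr x j) * x j - β * sigmoid (fr y j) * y j
        = β * (sigmoid (fr x j) * (x j - y j) + (sigmoid (fr x j) - sigmoid (fr y j)) * y j) := by
      ring
    rw [e1, abs_mul, abs_of_pos hβ]
    have h1 : |sigmoid (fr x j) * (x j - y j)| ≤ 1 * K := by
      rw [abs_mul]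
      exact mul_le_mul (by rw [abs_of_nonneg (sigmoid_nonneg _)]; exact sigmoid_le_one _)
        (hxy_coord j) (abs_nonneg _) zero_le_one
    have h2 : |(sigmoid (fr x j) - sigmoid (fr y j)) * y j| ≤ K / 4 * 1 := by
      rw [abs_mul]
      exact mul_le_mul ((sigmoid_dist _ _).trans (by
        have := hlipcoord fr hfr x y j
        linarith)) (hyi j) (abs_nonneg _) (by positivity)
    calc β * |sigmoid (fr x j) * (x j - y j) + (sigmoid (fr x j) - sigmoid (fr y j)) * y j|
        ≤ β * (1 * K + K / 4 * 1) := by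
          have := (abs_add_le (sigmoid (fr x j) * (x j - y j))
            ((sigmoid (fr x j) - sigmoid (fr y j)) * y j))
          nlinarith
      _ = 5 * β / 4 * K := by ring
  rw [pi_norm_le_iff_of_nonneg (by positivity)]
  intro i
  simp only [Pi.sub_apply, Real.norm_eq_abs, gruH]
  set a := sigmoid (fz x i)
  set a' := sigmoid (fz y i)
  set T := Real.tanh (fc wx i)
  set T' := Real.tanh (fc wy i)
  have ha : |a| ≤ 1 := by rw [abs_of_nonneg (sigmoid_nonneg _)]; exact sigmoid_le_one _
  have haa' : |a - a'| ≤ K / 4 := (sigmoid_dist _ _).trans (by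
    have := hlipcoord fz hfz x y i; linarith)
  have hTT' : |T - T'| ≤ 5 * β / 4 * K := by
    calc |T - T'| ≤ |fc wx i - fc wy i| := tanh_dist _ _
      _ ≤ ‖wx - wy‖ := hlipcoord fc hfc wx wy i
      _ ≤ 5 * β / 4 * K := hw
  have hT'y : |T' - y i| ≤ 2 := by
    have h1 := abs_tanh_le_one (fc wy i)
    have := abs_sub (T') (y i)
    calc |T' - y i| ≤ |T'| + |y i| := abs_sub _ _
      _ ≤ 2 := by have := hyi i; simp only [T'] at h1 ⊢; linarith
  have e : α * a * (T - x i) - α * a' * (T' - y i)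
      = α * (a * ((T - T') - (x i - y i)) + (a - a') * (T' - y i)) := by ring
  rw [e, abs_mul, abs_of_pos hα]
  calc α * |a * ((T - T') - (x i - y i)) + (a - a') * (T' - y i)|
      ≤ α * (|a| * |(T - T') - (x i - y i)| + |a - a'| * |T' - y i|) := by
        have h := abs_add_le (a * ((T - T') - (x i - y i))) ((a - a') * (T' - y i))
        rw [abs_mul, abs_mul] at h
        exact mul_le_mul_of_nonneg_left h hα.le
    _ ≤ α * (1 * (5 * β / 4 * K + K) + (K / 4) * 2) := by
        have h3 : |(T - T') - (x i - y i)| ≤ 5 * β / 4 * K + K :=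
          (abs_sub _ _).trans (by have := hxy_coord i; linarith)
        gcongr
    _ = α * (5 * β / 4 + 3 / 2) * K := by ring
end

section
/- Let Â be a real n×n matrix, W a real d×m matrix, and U a real m×d matrix. Define the map G on real n×d matrices by G(X) = Â·relu(Â·X·W)·U, where relu is applied entrywise (relu(t) = max(t, 0)). Then for all real n×d matrices X, Y, ‖G(X) − G(Y)‖_F ≤ ‖Â‖₂²·‖W‖₂·‖U‖₂·‖X − Y‖_F, where ‖·‖_F is the Frobenius norm and ‖·‖₂ is the spectral norm. In particular, if ‖Â‖₂²·‖W‖₂·‖U‖₂ < 1, then G is a contraction with respect to the Frobenius norm. -/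
open Matrix

/-- The Frobenius norm of a real matrix. -/
noncomputable def frobeniusNorm {m n : Type*} [Fintype m] [Fintype n]
    (M : Matrix m n ℝ) : ℝ :=
  Real.sqrt (∑ i, ∑ j, (M i j) ^ 2)

lemma frobeniusNorm_nonneg {m n : Type*} [Fintype m] [Fintype n] (M : Matrix m n ℝ) :
    0 ≤ frobeniusNorm M := Real.sqrt_nonneg _

lemma matSpectralNorm_nonneg {m n : Type*} [Fintype m] [Fintype n] [DecidableEq n]
    (M : Matrix m n ℝ) : 0 ≤ matSpectralNorm M := norm_nonneg _

lemma sq_frobeniusNorm {m n : Type*} [Fintype m] [Fintype n] (M : Matrix m n ℝ) :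
    frobeniusNorm M ^ 2 = ∑ i, ∑ j, (M i j) ^ 2 := by
  refine Real.sq_sqrt ?_
  positivity

lemma frobeniusNorm_transpose {m n : Type*} [Fintype m] [Fintype n] (M : Matrix m n ℝ) :
    frobeniusNorm Mᵀ = frobeniusNorm M := by
  unfold frobeniusNorm
  rw [Finset.sum_comm]
  rfl

lemma matSpectralNorm_mulVec_le {m n : Type*} [Fintype m] [Fintype n] [DecidableEq n]
    (M : Matrix m n ℝ) (x : EuclideanSpace ℝ n) :
    ‖(WithLp.equiv 2 (m → ℝ)).symm (M *ᵥ (WithLp.equiv 2 (n → ℝ)) x)‖ ≤ matSpectralNorm M * ‖x‖ := by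
  have := (LinearMap.toContinuousLinearMap (Matrix.toEuclideanLin M)).le_opNorm x
  simpa [matSpectralNorm, Matrix.toEuclideanLin_apply] using this

lemma matSpectralNorm_transpose {m n : Type*} [Fintype m] [Fintype n] [DecidableEq m] [DecidableEq n]
    (M : Matrix m n ℝ) : matSpectralNorm Mᵀ = matSpectralNorm M := by
  unfold matSpectralNorm
  have h : Mᵀ = Mᴴ := (Matrix.conjTranspose_eq_transpose_of_trivial M).symm
  rw [h, Matrix.toEuclideanLin_conjTranspose_eq_adjoint,
    LinearMap.adjoint_toContinuousLinearMap]
  exact ContinuousLinearMap.adjoint.norm_map _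

lemma frobenius_mul_left {m n p : Type*} [Fintype m] [Fintype n] [Fintype p] [DecidableEq n]
    (A : Matrix m n ℝ) (B : Matrix n p ℝ) :
    frobeniusNorm (A * B) ≤ matSpectralNorm A * frobeniusNorm B := by
  have hsq : frobeniusNorm (A * B) ^ 2 ≤ (matSpectralNorm A * frobeniusNorm B) ^ 2 := by
    rw [sq_frobeniusNorm, Finset.sum_comm]
    have hcol : ∀ j : p, ∑ i, (A * B) i j ^ 2 ≤ matSpectralNorm A ^ 2 * ∑ i, B i j ^ 2 := by
      intro j
      set x : EuclideanSpace ℝ n := (WithLp.equiv 2 (n → ℝ)).symm (fun i => B i j) with hx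
      have hb := matSpectralNorm_mulVec_le A x
      have hxnorm : ‖x‖ = Real.sqrt (∑ i, B i j ^ 2) := by
        rw [EuclideanSpace.norm_eq]
        congr 1
        apply Finset.sum_congr rfl
        intro i _
        rw [Real.norm_eq_abs, sq_abs]
        rfl
      have hAx : ‖(WithLp.equiv 2 (m → ℝ)).symm (A *ᵥ (WithLp.equiv 2 (n → ℝ)) x)‖
          = Real.sqrt (∑ i, (A * B) i j ^ 2) := by
        rw [EuclideanSpace.norm_eq]
        congr 1
        apply Finset.sum_congr rfl
        intro i _
        rw [Real.norm_eq_abs, sq_abs]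
        simp [hx, Matrix.mulVec, Matrix.mul_apply, dotProduct]
      rw [hAx, hxnorm] at hb
      have hb2 : Real.sqrt (∑ i, (A * B) i j ^ 2) ^ 2
          ≤ (matSpectralNorm A * Real.sqrt (∑ i, B i j ^ 2)) ^ 2 := by
        apply pow_le_pow_left₀ (Real.sqrt_nonneg _) hb
      rw [Real.sq_sqrt (by positivity)] at hb2
      calc ∑ i, (A * B) i j ^ 2 ≤ (matSpectralNorm A * Real.sqrt (∑ i, B i j ^ 2)) ^ 2 := hb2
        _ = matSpectralNorm A ^ 2 * ∑ i, B i j ^ 2 := by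
            rw [mul_pow, Real.sq_sqrt (by positivity)]
    calc ∑ j, ∑ i, (A * B) i j ^ 2 ≤ ∑ j, matSpectralNorm A ^ 2 * ∑ i, B i j ^ 2 :=
          Finset.sum_le_sum fun j _ => hcol j
      _ = (matSpectralNorm A * frobeniusNorm B) ^ 2 := by
          rw [← Finset.mul_sum, mul_pow, sq_frobeniusNorm, Finset.sum_comm]
  have h1 : 0 ≤ matSpectralNorm A * frobeniusNorm B :=
    mul_nonneg (matSpectralNorm_nonneg _) (frobeniusNorm_nonneg _)
  nlinarith [frobeniusNorm_nonneg (A * B)]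

lemma frobenius_mul_right {m n p : Type*} [Fintype m] [Fintype n] [Fintype p]
    [DecidableEq n] [DecidableEq p] (B : Matrix m n ℝ) (C : Matrix n p ℝ) :
    frobeniusNorm (B * C) ≤ frobeniusNorm B * matSpectralNorm C := by
  calc frobeniusNorm (B * C) = frobeniusNorm ((B * C)ᵀ) := (frobeniusNorm_transpose _).symm
    _ = frobeniusNorm (Cᵀ * Bᵀ) := by rw [Matrix.transpose_mul]
    _ ≤ matSpectralNorm Cᵀ * frobeniusNorm Bᵀ := frobenius_mul_left _ _
    _ = frobeniusNorm B * matSpectralNorm C := by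
        rw [matSpectralNorm_transpose, frobeniusNorm_transpose, mul_comm]

lemma frobenius_relu_lipschitz {m n : Type*} [Fintype m] [Fintype n] (P Q : Matrix m n ℝ) :
    frobeniusNorm (P.map (fun t => max t 0) - Q.map (fun t => max t 0)) ≤ frobeniusNorm (P - Q) := by
  apply Real.sqrt_le_sqrt
  apply Finset.sum_le_sum
  intro i _
  apply Finset.sum_le_sum
  intro j _
  have h : |max (P i j) 0 - max (Q i j) 0| ≤ |P i j - Q i j| :=
    abs_max_sub_max_le_abs _ _ _
  calc (P.map (fun t => max t 0) - Q.map (fun t => max t 0)) i j ^ 2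
      = (max (P i j) 0 - max (Q i j) 0) ^ 2 := by simp [Matrix.map_apply]
    _ ≤ (P i j - Q i j) ^ 2 := by
        rw [← sq_abs, ← sq_abs (P i j - Q i j)]
        exact pow_le_pow_left₀ (abs_nonneg _) h 2
    _ = (P - Q) i j ^ 2 := by simp

/-- The two-layer GCN `G(X) = Â · relu(Â · X · W) · U` (with entrywise `relu`) satisfies
`‖G X − G Y‖_F ≤ ‖Â‖₂² ‖W‖₂ ‖U‖₂ ‖X − Y‖_F`; in particular, if
`‖Â‖₂² ‖W‖₂ ‖U‖₂ < 1` then `G` is a contraction in the Frobenius norm. -/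
theorem gcn_lipschitz_frobenius {n d m : ℕ}
    (Ahat : Matrix (Fin n) (Fin n) ℝ) (W : Matrix (Fin d) (Fin m) ℝ)
    (U : Matrix (Fin m) (Fin d) ℝ) :
    (∀ X Y : Matrix (Fin n) (Fin d) ℝ,
        frobeniusNorm
            (Ahat * ((Ahat * X * W).map fun t => max t 0) * U -
              Ahat * ((Ahat * Y * W).map fun t => max t 0) * U) ≤
          matSpectralNorm Ahat ^ 2 * matSpectralNorm W * matSpectralNorm U *
            frobeniusNorm (X - Y)) ∧
      (matSpectralNorm Ahat ^ 2 * matSpectralNorm W * matSpectralNorm U < 1 →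
        ∃ k : ℝ, k < 1 ∧ ∀ X Y : Matrix (Fin n) (Fin d) ℝ,
          frobeniusNorm
              (Ahat * ((Ahat * X * W).map fun t => max t 0) * U -
                Ahat * ((Ahat * Y * W).map fun t => max t 0) * U) ≤
            k * frobeniusNorm (X - Y)) := by
  have main : ∀ X Y : Matrix (Fin n) (Fin d) ℝ,
      frobeniusNorm
          (Ahat * ((Ahat * X * W).map fun t => max t 0) * U -
            Ahat * ((Ahat * Y * W).map fun t => max t 0) * U) ≤
        matSpectralNorm Ahat ^ 2 * matSpectralNorm W * matSpectralNorm U *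
          frobeniusNorm (X - Y) := by
    intro X Y
    set M := (Ahat * X * W).map fun t => max t 0 with hM
    set N := (Ahat * Y * W).map fun t => max t 0 with hN
    have hA := matSpectralNorm_nonneg Ahat
    have hW := matSpectralNorm_nonneg W
    have hU := matSpectralNorm_nonneg U
    have hrw : Ahat * M * U - Ahat * N * U = Ahat * ((M - N) * U) := by
      rw [Matrix.sub_mul, Matrix.mul_sub, ← Matrix.mul_assoc, ← Matrix.mul_assoc]
    have h1 : frobeniusNorm (Ahat * M * U - Ahat * N * U)
        ≤ matSpectralNorm Ahat * frobeniusNorm ((M - N) * U) := by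
      rw [hrw]; exact frobenius_mul_left _ _
    have h2 : frobeniusNorm ((M - N) * U) ≤ frobeniusNorm (M - N) * matSpectralNorm U :=
      frobenius_mul_right _ _
    have h3 : frobeniusNorm (M - N) ≤ frobeniusNorm (Ahat * X * W - Ahat * Y * W) :=
      frobenius_relu_lipschitz _ _
    have hrw2 : Ahat * X * W - Ahat * Y * W = Ahat * ((X - Y) * W) := by
      rw [Matrix.sub_mul, Matrix.mul_sub, ← Matrix.mul_assoc, ← Matrix.mul_assoc]
    have h4 : frobeniusNorm (Ahat * X * W - Ahat * Y * W)
        ≤ matSpectralNorm Ahat * (frobeniusNorm (X - Y) * matSpectralNorm W) := by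
      rw [hrw2]
      calc frobeniusNorm (Ahat * ((X - Y) * W))
          ≤ matSpectralNorm Ahat * frobeniusNorm ((X - Y) * W) := frobenius_mul_left _ _
        _ ≤ matSpectralNorm Ahat * (frobeniusNorm (X - Y) * matSpectralNorm W) :=
            mul_le_mul_of_nonneg_left (frobenius_mul_right _ _) hA
    have hFXY := frobeniusNorm_nonneg (X - Y)
    have hFMN := frobeniusNorm_nonneg (M - N)
    nlinarith [mul_le_mul_of_nonneg_right h3 hU,
      mul_le_mul_of_nonneg_right (mul_le_mul_of_nonneg_left h4 hA) hU,
      mul_le_mul_of_nonneg_left h2 hA]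
  refine ⟨main, fun hlt => ⟨matSpectralNorm Ahat ^ 2 * matSpectralNorm W * matSpectralNorm U, hlt, main⟩⟩
end

section
/- Let M and H be real n×n matrices. Then the function t ↦ tr(expm(M + t·H)) from ℝ to ℝ is differentiable at t = 0, with derivative equal to tr(expm(M)·H), where expm denotes the matrix exponential and tr the trace. -/
open Matrix

namespace TraceExpAux

attribute [local instance] Matrix.linftyOpNormedRing Matrix.linftyOpNormedAlgebra

variable {n : ℕ} (M H : Matrix (Fin n) (Fin n) ℝ)

noncomputable def traceCLM : Matrix (Fin n) (Fin n) ℝ →L[ℝ] ℝ :=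
  LinearMap.toContinuousLinearMap (Matrix.traceLinearMap (Fin n) ℝ ℝ)

@[simp] lemma traceCLM_apply (A : Matrix (Fin n) (Fin n) ℝ) :
    traceCLM A = A.trace := rfl

lemma hasDerivAt_pow_aux (k : ℕ) (t : ℝ) :
    HasDerivAt (fun s : ℝ => (M + s • H) ^ k)
      (∑ i ∈ Finset.range k,
        (M + t • H) ^ i * H * (M + t • H) ^ (k - 1 - i)) t := by
  induction k with
  | zero =>
    simp only [pow_zero, Finset.range_zero, Finset.sum_empty]
    exact hasDerivAt_const t _
  | succ k ih =>
    have hbase : HasDerivAt (fun s : ℝ => M + s • H) H t := by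
      have h0 := ((hasDerivAt_id' t).smul_const H).const_add M
      rw [one_smul] at h0
      exact h0
    have h := hbase.mul ih
    have hfun : ((fun s : ℝ => M + s • H) * fun s : ℝ => (M + s • H) ^ k)
        = fun s : ℝ => (M + s • H) ^ (k + 1) := by
      funext s; rw [Pi.mul_apply, ← pow_succ']
    rw [hfun] at h
    refine h.congr_deriv (Eq.symm ?_)
    set X := M + t • H with hX
    rw [Finset.sum_range_succ']
    have h0 : X ^ 0 * H * X ^ (k + 1 - 1 - 0) = H * X ^ k := by
      simp
    rw [h0, Finset.mul_sum, add_comm]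
    congr 1
    refine Finset.sum_congr rfl fun i hi => ?_
    have hi' : i < k := Finset.mem_range.mp hi
    have he : k + 1 - 1 - (i + 1) = k - 1 - i := by omega
    rw [he, pow_succ']
    simp only [mul_assoc]

lemma trace_deriv_aux (k : ℕ) (X : Matrix (Fin n) (Fin n) ℝ) :
    (∑ i ∈ Finset.range k, X ^ i * H * X ^ (k - 1 - i)).trace
      = (k : ℝ) * (X ^ (k - 1) * H).trace := by
  rw [Matrix.trace_sum]
  have : ∀ i ∈ Finset.range k,
      (X ^ i * H * X ^ (k - 1 - i)).trace = (X ^ (k - 1) * H).trace := by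
    intro i hi
    have hi' : i < k := Finset.mem_range.mp hi
    rw [Matrix.trace_mul_comm, ← Matrix.mul_assoc, ← pow_add]
    have he : k - 1 - i + i = k - 1 := by omega
    rw [he]
  rw [Finset.sum_congr rfl this, Finset.sum_const, Finset.card_range,
    nsmul_eq_mul]

end TraceExpAux

open TraceExpAux in
/-- For real `n × n` matrices `M` and `H`, the map `t ↦ tr(expm(M + t·H))` is
differentiable at `t = 0` with derivative `tr(expm(M)·H)`. -/
theorem hasDerivAt_trace_exp {n : ℕ} (M H : Matrix (Fin n) (Fin n) ℝ) :
    HasDerivAt (fun t : ℝ => (NormedSpace.exp (M + t • H)).trace)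
      ((NormedSpace.exp M * H).trace) 0 := by
  letI : NormedRing (Matrix (Fin n) (Fin n) ℝ) := Matrix.linftyOpNormedRing
  letI : NormedAlgebra ℝ (Matrix (Fin n) (Fin n) ℝ) := Matrix.linftyOpNormedAlgebra
  set c : ℝ := @norm _ (ContinuousLinearMap.hasOpNorm (𝕜 := ℝ) (𝕜₂ := ℝ) (σ₁₂ := RingHom.id ℝ))
    (traceCLM (n := n)) with hc
  set R : ℝ := ‖M‖ + ‖H‖ with hR
  have hc0 : 0 ≤ c := norm_nonneg _
  have hR0 : 0 ≤ R := by positivity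
  -- the functions in the series and their derivatives
  set g : ℕ → ℝ → ℝ := fun k t => ((k.factorial : ℝ))⁻¹ * ((M + t • H) ^ k).trace
    with hg
  set g' : ℕ → ℝ → ℝ := fun k t =>
    ((k.factorial : ℝ))⁻¹ * ((k : ℝ) * (((M + t • H) ^ (k - 1)) * H).trace) with hg'
  -- bound sequence
  set u : ℕ → ℝ := fun k =>
    ((k.factorial : ℝ))⁻¹ * ((k : ℝ) * (c * (R ^ (k - 1) * ‖H‖))) with hu
  have hu_summable : Summable u := by
    rw [← summable_nat_add_iff 1]
    have : (fun k : ℕ => u (k + 1))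
        = fun k : ℕ => (c * ‖H‖) * (R ^ k / k.factorial) := by
      funext k
      have h1 : ((k + 1).factorial : ℝ) = (k + 1 : ℕ) * (k.factorial : ℝ) := by
        rw [Nat.factorial_succ]; push_cast; ring
      have h2 : (k.factorial : ℝ) ≠ 0 := Nat.cast_ne_zero.mpr k.factorial_ne_zero
      have h3 : ((k : ℝ) + 1) ≠ 0 := by positivity
      simp only [hu, h1, Nat.add_sub_cancel]
      push_cast
      field_simp
    rw [this]
    exact (Real.summable_pow_div_factorial R).mul_left _
  -- derivatives of the terms
  have hderiv : ∀ k : ℕ, ∀ t : ℝ, HasDerivAt (g k) (g' k t) t := by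
    intro k t
    have h1 := (traceCLM (n := n)).hasFDerivAt.comp_hasDerivAt t
      (hasDerivAt_pow_aux M H k t)
    simp only [Function.comp_def, traceCLM_apply] at h1
    have h2 : HasDerivAt (fun x : ℝ => ((M + x • H) ^ k).trace)
        ((k : ℝ) * (((M + t • H) ^ (k - 1)) * H).trace) t := by
      rw [← trace_deriv_aux]; exact h1
    exact h2.const_mul _
  -- norm bound on derivatives on the unit ball
  have hX_le : ∀ t : ℝ, t ∈ Metric.ball (0 : ℝ) 1 → ‖M + t • H‖ ≤ R := by
    intro t ht
    have : |t| ≤ 1 := le_of_lt (by simpa [Real.dist_eq] using ht)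
    calc ‖M + t • H‖ ≤ ‖M‖ + ‖t • H‖ := norm_add_le _ _
      _ ≤ ‖M‖ + ‖H‖ := by
          rw [norm_smul]
          have : ‖t‖ * ‖H‖ ≤ 1 * ‖H‖ :=
            mul_le_mul_of_nonneg_right (by simpa using this) (norm_nonneg _)
          simpa using add_le_add_left this ‖M‖
  have hpow_le : ∀ t : ℝ, t ∈ Metric.ball (0 : ℝ) 1 → ∀ j : ℕ,
      ‖(M + t • H) ^ j * H‖ ≤ R ^ j * ‖H‖ := by
    intro t ht j
    induction j with
    | zero => simp
    | succ j ihj =>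
      have h1 : (M + t • H) ^ (j + 1) * H = (M + t • H) * ((M + t • H) ^ j * H) := by
        rw [pow_succ', mul_assoc]
      rw [h1]
      calc ‖(M + t • H) * ((M + t • H) ^ j * H)‖
          ≤ ‖M + t • H‖ * ‖(M + t • H) ^ j * H‖ := norm_mul_le _ _
        _ ≤ R * (R ^ j * ‖H‖) := by
            apply mul_le_mul (hX_le t ht) ihj (norm_nonneg _) hR0
        _ = R ^ (j + 1) * ‖H‖ := by ring
  have hbound : ∀ k : ℕ, ∀ t : ℝ, t ∈ Metric.ball (0 : ℝ) 1 → ‖g' k t‖ ≤ u k := by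
    intro k t ht
    have htr : |(((M + t • H) ^ (k - 1)) * H).trace| ≤ c * (R ^ (k - 1) * ‖H‖) := by
      have h1 := (traceCLM (n := n)).le_opNorm (((M + t • H) ^ (k - 1)) * H)
      simp only [traceCLM_apply, Real.norm_eq_abs] at h1
      exact h1.trans (mul_le_mul_of_nonneg_left (hpow_le t ht (k - 1)) hc0)
    have hfac : (0 : ℝ) < (k.factorial : ℝ) := by positivity
    simp only [hg', hu, Real.norm_eq_abs, abs_mul]
    rw [abs_of_pos (inv_pos.mpr hfac)]
    apply mul_le_mul_of_nonneg_left _ (le_of_lt (inv_pos.mpr hfac))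
    rw [abs_of_nonneg (by positivity : (0 : ℝ) ≤ (k : ℝ))]
    exact mul_le_mul_of_nonneg_left htr (by positivity)
  -- summability at 0
  have hsum_at : ∀ t : ℝ, Summable (fun k => g k t) := by
    intro t
    have h1 : Summable fun k : ℕ => ((k.factorial : ℝ))⁻¹ • (M + t • H) ^ k :=
      NormedSpace.expSeries_summable' (𝕂 := ℝ) (M + t • H)
    have h2 := h1.map (traceCLM (n := n)) (traceCLM (n := n)).continuous
    simpa [hg, Function.comp_def, Matrix.trace_smul, smul_eq_mul] using h2
  -- the function equals the series
  have hfun_eq : (fun t : ℝ => (NormedSpace.exp (M + t • H)).trace)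
      = fun t : ℝ => ∑' k : ℕ, g k t := by
    funext t
    rw [NormedSpace.exp_eq_tsum ℝ]
    have h1 : Summable fun k : ℕ => ((k.factorial : ℝ))⁻¹ • (M + t • H) ^ k :=
      NormedSpace.expSeries_summable' (𝕂 := ℝ) (M + t • H)
    have h2 := (traceCLM (n := n)).map_tsum h1
    simpa [hg, smul_eq_mul] using h2
  -- apply termwise differentiation
  have hmain : HasDerivAt (fun t : ℝ => ∑' k : ℕ, g k t) (∑' k : ℕ, g' k 0) 0 := by
    refine hasDerivAt_tsum_of_isPreconnected hu_summable Metric.isOpen_ball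
      (convex_ball (0:ℝ) 1).isPreconnected (fun k y _ => hderiv k y) hbound ?_ (hsum_at 0) ?_
    · simpa using Metric.mem_ball_self one_pos
    · simpa using Metric.mem_ball_self one_pos
  -- identify the sum of derivatives
  have hval : (∑' k : ℕ, g' k 0) = (NormedSpace.exp M * H).trace := by
    have hsum' : Summable fun k => g' k 0 :=
      Summable.of_norm_bounded hu_summable
        (fun k => hbound k 0 (by simpa using Metric.mem_ball_self one_pos))
    rw [hsum'.tsum_eq_zero_add]
    have h0 : g' 0 0 = 0 := by simp [hg']
    have hsucc : ∀ k : ℕ, g' (k + 1) 0 = ((k.factorial : ℝ))⁻¹ * (M ^ k * H).trace := by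
      intro k
      have h1 : (((k + 1).factorial : ℝ))⁻¹ * ((k + 1 : ℕ) : ℝ)
          = ((k.factorial : ℝ))⁻¹ := by
        rw [Nat.factorial_succ]
        have h2 : (k.factorial : ℝ) ≠ 0 := Nat.cast_ne_zero.mpr k.factorial_ne_zero
        have h3 : ((k : ℝ) + 1) ≠ 0 := by positivity
        push_cast
        field_simp
      simp only [hg', Nat.add_sub_cancel, zero_smul, add_zero, ← mul_assoc]
      rw [h1]
    rw [h0, zero_add]
    have hrw : (fun k : ℕ => g' (k + 1) 0)
        = fun k : ℕ => ((k.factorial : ℝ))⁻¹ * (M ^ k * H).trace := funext hsucc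
    rw [hrw]
    -- now compute tr(exp M * H)
    have h1 : Summable fun k : ℕ => ((k.factorial : ℝ))⁻¹ • M ^ k :=
      NormedSpace.expSeries_summable' (𝕂 := ℝ) M
    set L : Matrix (Fin n) (Fin n) ℝ →L[ℝ] ℝ :=
      (traceCLM (n := n)).comp ((ContinuousLinearMap.mul ℝ _).flip H) with hL
    have hLapp : ∀ A : Matrix (Fin n) (Fin n) ℝ, L A = (A * H).trace := fun A => rfl
    have h2 := L.map_tsum h1
    rw [NormedSpace.exp_eq_tsum ℝ]
    rw [show ((∑' k : ℕ, ((k.factorial : ℝ))⁻¹ • M ^ k) * H).trace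
        = L (∑' k : ℕ, ((k.factorial : ℝ))⁻¹ • M ^ k) from rfl, h2]
    refine tsum_congr fun k => ?_
    rw [hLapp, smul_mul_assoc, Matrix.trace_smul, smul_eq_mul]
  rw [hfun_eq, ← hval]
  exact hmain
end

section
/- Let M be a real n×n matrix with entrywise nonnegative entries. Then tr(expm(M)) = n if and only if M is nilpotent, i.e., M^n = 0. In particular, for any real n×n matrix A, tr(expm(A ⊙ A)) = n if and only if A ⊙ A is nilpotent, where A ⊙ A is the entrywise square of A. -/
open Matrix Nat

section Aux

variable {n : ℕ}

lemma pow_entry_nonneg (M : Matrix (Fin n) (Fin n) ℝ) (hM : ∀ i j, 0 ≤ M i j) :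
    ∀ k i j, 0 ≤ (M ^ k) i j := by
  intro k
  induction k with
  | zero =>
    intro i j
    simp only [pow_zero, Matrix.one_apply]
    split <;> norm_num
  | succ k ih =>
    intro i j
    rw [pow_succ, Matrix.mul_apply]
    exact Finset.sum_nonneg fun l _ => mul_nonneg (ih i l) (hM l j)

/-- From a nonzero entry of `M ^ k`, extract a path of length `k`. -/
lemma exists_path (M : Matrix (Fin n) (Fin n) ℝ) :
    ∀ k i j, (M ^ k) i j ≠ 0 →
      ∃ v : ℕ → Fin n, v 0 = i ∧ v k = j ∧ ∀ t < k, M (v t) (v (t + 1)) ≠ 0 := by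
  intro k
  induction k with
  | zero =>
    intro i j h
    rw [pow_zero, Matrix.one_apply] at h
    have hij : i = j := by by_contra hne; simp [hne] at h
    exact ⟨fun _ => i, rfl, hij ▸ rfl, fun t ht => absurd ht (Nat.not_lt_zero t)⟩
  | succ k ih =>
    intro i j h
    have hps : M ^ (k + 1) = M * M ^ k := pow_succ' M k
    rw [hps, Matrix.mul_apply] at h
    obtain ⟨l, -, hl⟩ := Finset.exists_ne_zero_of_sum_ne_zero h
    have h1 : M i l ≠ 0 := fun h0 => hl (by rw [h0, zero_mul])
    have h2 : (M ^ k) l j ≠ 0 := fun h0 => hl (by rw [h0, mul_zero])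
    obtain ⟨v, hv0, hvk, hve⟩ := ih l j h2
    refine ⟨fun t => if t = 0 then i else v (t - 1), by simp, by simp [hvk], ?_⟩
    intro t ht
    cases t with
    | zero => simpa [hv0] using h1
    | succ s =>
      simpa using hve s (Nat.lt_of_succ_lt_succ ht)

lemma transGen_of_path (M : Matrix (Fin n) (Fin n) ℝ) {k : ℕ} {v : ℕ → Fin n}
    (hve : ∀ t < k, M (v t) (v (t + 1)) ≠ 0) :
    ∀ d a, a + d + 1 ≤ k →
      Relation.TransGen (fun x y => M x y ≠ 0) (v a) (v (a + d + 1)) := by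
  intro d
  induction d with
  | zero =>
    intro a ha
    exact Relation.TransGen.single (hve a (by omega))
  | succ d ihd =>
    intro a ha
    have : a + (d + 1) + 1 = (a + d + 1) + 1 := by omega
    rw [this]
    exact Relation.TransGen.tail (ihd a (by omega)) (hve (a + d + 1) (by omega))

lemma transGen_pow_pos (M : Matrix (Fin n) (Fin n) ℝ) (hM : ∀ i j, 0 ≤ M i j)
    {i j : Fin n} (h : Relation.TransGen (fun x y => M x y ≠ 0) i j) :
    ∃ k, (M ^ (k + 1)) i j ≠ 0 := by
  induction h with
  | single hb => exact ⟨0, by simpa using hb⟩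
  | tail _ hbc ih =>
    obtain ⟨k, hk⟩ := ih
    rename_i b c _
    refine ⟨k + 1, ?_⟩
    have hpos : 0 < (M ^ (k + 1 + 1)) i c := by
      rw [pow_succ, Matrix.mul_apply]
      refine Finset.sum_pos' (fun l _ => mul_nonneg (pow_entry_nonneg M hM _ i l) (hM l c))
        ⟨b, Finset.mem_univ b, ?_⟩
      exact mul_pos (lt_of_le_of_ne (pow_entry_nonneg M hM _ i b) (Ne.symm hk))
        (lt_of_le_of_ne (hM b c) (Ne.symm hbc))
    exact ne_of_gt hpos

/-- If all diagonal entries of all positive powers of a nonnegative matrix vanish,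
then `M ^ n = 0`. -/
lemma pow_card_eq_zero_of_diag (M : Matrix (Fin n) (Fin n) ℝ) (hM : ∀ i j, 0 ≤ M i j)
    (hd : ∀ k i, (M ^ (k + 1)) i i = 0) : M ^ n = 0 := by
  ext i j
  simp only [Matrix.zero_apply]
  by_contra h
  obtain ⟨v, hv0, hvk, hve⟩ := exists_path M n i j h
  -- pigeonhole on v : Fin (n+1) → Fin n
  have hcard : Fintype.card (Fin n) < Fintype.card (Fin (n + 1)) := by simp
  obtain ⟨a, b, hab, hv⟩ :=
    Fintype.exists_ne_map_eq_of_card_lt (fun t : Fin (n + 1) => v t) hcard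
  wlog hlt : (a : ℕ) < (b : ℕ) generalizing a b
  · have hne : (a : ℕ) ≠ (b : ℕ) := fun he => hab (Fin.ext he)
    exact this b a (Ne.symm hab) hv.symm (by omega)
  · have hb : (a : ℕ) + ((b : ℕ) - (a : ℕ) - 1) + 1 = (b : ℕ) := by omega
    have htg := transGen_of_path M hve ((b : ℕ) - (a : ℕ) - 1) a (by omega)
    rw [hb, ← hv] at htg
    obtain ⟨k, hk⟩ := transGen_pow_pos M hM htg
    exact hk (hd k (v a))

lemma key (M : Matrix (Fin n) (Fin n) ℝ) (hM : ∀ i j, 0 ≤ M i j) :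
    (NormedSpace.exp M).trace = n ↔ M ^ n = 0 := by
  letI : SeminormedRing (Matrix (Fin n) (Fin n) ℝ) := Matrix.linftyOpSemiNormedRing
  letI : NormedRing (Matrix (Fin n) (Fin n) ℝ) := Matrix.linftyOpNormedRing
  letI : NormedAlgebra ℝ (Matrix (Fin n) (Fin n) ℝ) := Matrix.linftyOpNormedAlgebra
  have hsum : HasSum (fun k : ℕ => (k !⁻¹ : ℝ) • M ^ k) (NormedSpace.exp M) := by
    rw [NormedSpace.exp_eq_tsum (𝕂 := ℝ)]
    exact (NormedSpace.expSeries_summable' (𝕂 := ℝ) M).hasSum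
  have hcont : Continuous (Matrix.traceLinearMap (Fin n) ℝ ℝ) :=
    LinearMap.continuous_of_finiteDimensional _
  have htr : HasSum (fun k : ℕ => (k !⁻¹ : ℝ) * (M ^ k).trace)
      (NormedSpace.exp M).trace := by
    have := hsum.map (Matrix.traceLinearMap (Fin n) ℝ ℝ) hcont
    simpa [Function.comp_def, Matrix.trace_smul, smul_eq_mul] using this
  have hf0 : (0! : ℝ)⁻¹ * (M ^ 0).trace = n := by
    simp [Matrix.trace_one]
  have hnonneg : ∀ k, 0 ≤ (k !⁻¹ : ℝ) * (M ^ k).trace := by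
    intro k
    refine mul_nonneg (by positivity) ?_
    exact Finset.sum_nonneg fun i _ => pow_entry_nonneg M hM k i i
  constructor
  · -- trace exp = n → M^n = 0
    intro h
    have htail : HasSum (fun k : ℕ => (((k + 1) : ℕ)!⁻¹ : ℝ) * (M ^ (k + 1)).trace) 0 := by
      have := (hasSum_nat_add_iff' (f := fun k : ℕ => (k !⁻¹ : ℝ) * (M ^ k).trace) 1).2 htr
      simpa [h, hf0] using this
    have hzero : ∀ k : ℕ, (((k + 1) : ℕ)!⁻¹ : ℝ) * (M ^ (k + 1)).trace = 0 := by
      have := (hasSum_zero_iff_of_nonneg fun k => hnonneg (k + 1)).1 htail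
      exact fun k => congrFun this k
    have hdtr : ∀ k : ℕ, (M ^ (k + 1)).trace = 0 := by
      intro k
      have hfac : (((k + 1) : ℕ)!⁻¹ : ℝ) ≠ 0 := by positivity
      exact (mul_eq_zero.1 (hzero k)).resolve_left hfac
    apply pow_card_eq_zero_of_diag M hM
    intro k i
    have := hdtr k
    rw [Matrix.trace] at this
    have := (Finset.sum_eq_zero_iff_of_nonneg
      (fun i _ => pow_entry_nonneg M hM (k + 1) i i)).1 this
    exact this i (Finset.mem_univ i)
  · -- M^n = 0 → trace exp = n
    intro h
    have hdtr : ∀ k : ℕ, (M ^ (k + 1)).trace = 0 := by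
      intro k
      have hnil : IsNilpotent (M ^ (k + 1)) := by
        refine ⟨n, ?_⟩
        rw [← pow_mul, mul_comm, pow_mul, h, zero_pow (Nat.succ_ne_zero k)]
      have := Matrix.isNilpotent_trace_of_isNilpotent hnil
      exact this.eq_zero
    have : HasSum (fun k : ℕ => (k !⁻¹ : ℝ) * (M ^ k).trace) ((n : ℝ)) := by
      have hs : HasSum (fun k : ℕ => (k !⁻¹ : ℝ) * (M ^ k).trace)
          ((0! : ℝ)⁻¹ * (M ^ 0).trace) := by
        apply hasSum_single 0
        intro k hk
        obtain ⟨m, rfl⟩ := Nat.exists_eq_succ_of_ne_zero hk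
        rw [hdtr m, mul_zero]
      rwa [hf0] at hs
    exact htr.unique this

end Aux

/-- For an entrywise nonnegative real `n × n` matrix `M`, `tr(expm(M)) = n` iff `M`
is nilpotent (`M^n = 0`); in particular, for any real `n × n` matrix `A`,
`tr(expm(A ⊙ A)) = n` iff the entrywise square `A ⊙ A` is nilpotent. -/
theorem trace_exp_eq_iff_nilpotent {n : ℕ} (M : Matrix (Fin n) (Fin n) ℝ)
    (hM : ∀ i j, 0 ≤ M i j) :
    ((NormedSpace.exp M).trace = n ↔ M ^ n = 0) ∧
      ∀ A : Matrix (Fin n) (Fin n) ℝ,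
        ((NormedSpace.exp (A ⊙ A)).trace = n ↔ (A ⊙ A) ^ n = 0) := by
  refine ⟨key M hM, fun A => key (A ⊙ A) fun i j => ?_⟩
  rw [Matrix.hadamard_apply]
  exact mul_self_nonneg _
end
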